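/- Let T₁ and T₂ be subspaces of a finite-dimensional real inner product space E, with orthogonal projections P_{T₁}, P_{T₂}, P_{T₁^⊥}, P_{T₂^⊥}. Define the linear map M := P_{T₁} ∘ P_{T₂} + P_{T₁^⊥} ∘ P_{T₂^⊥}. Then (a) M is normal, i.e. M ∘ M* = M* ∘ M where M* is the adjoint of M; and (b) the fixed subspace of M satisfies {x : M x = x} = (T₁ ∩ T₂) ⊕ (T₁^⊥ ∩ T₂^⊥) (the sum of these two mutually orthogonal subspaces). -/

import Mathlib

open ContinuousLinearMap

/-- The orthogonal projection onto a subspace, as a continuous linear endomorphism. -/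
noncomputable def projCLM {E : Type*} [NormedAddCommGroup E] [InnerProductSpace ℝ E]
    [FiniteDimensional ℝ E] (T : Submodule ℝ E) : E →L[ℝ] E :=
  T.subtypeL.comp (T.orthogonalProjectionOnto)

section Aux

variable {E : Type*} [NormedAddCommGroup E] [InnerProductSpace ℝ E] [FiniteDimensional ℝ E]

lemma projCLM_apply (T : Submodule ℝ E) (x : E) :
    projCLM T x = (T.orthogonalProjectionOnto x : E) := rfl

lemma projCLM_mem (T : Submodule ℝ E) (x : E) : projCLM T x ∈ T :=
  (T.orthogonalProjectionOnto x).2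

lemma projCLM_of_mem (T : Submodule ℝ E) {x : E} (hx : x ∈ T) : projCLM T x = x :=
  Submodule.starProjection_eq_self_iff.2 hx

lemma projCLM_of_mem_orth (T : Submodule ℝ E) {x : E} (hx : x ∈ Tᗮ) : projCLM T x = 0 := by
  rw [projCLM_apply, Submodule.orthogonalProjectionOnto_apply_of_mem_orthogonal hx,
    Submodule.coe_zero]

lemma projCLM_orth (T : Submodule ℝ E) : projCLM Tᗮ = 1 - projCLM T := by
  ext x
  have := Submodule.starProjection_add_starProjection_orthogonal (K := T) x
  simp only [ContinuousLinearMap.sub_apply, ContinuousLinearMap.one_apply, projCLM_apply]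
  rw [eq_sub_iff_add_eq, add_comm]
  exact this

lemma projCLM_idem (T : Submodule ℝ E) : projCLM T * projCLM T = projCLM T := by
  ext x
  exact projCLM_of_mem T (projCLM_mem T x)

lemma projCLM_star (T : Submodule ℝ E) : star (projCLM T) = projCLM T :=
  isSelfAdjoint_starProjection T

end Aux

lemma idem_mul_key {R : Type*} [Ring R] (a b : R) (ha : a * a = a) (hb : b * b = b) :
    (a * b + (1 - a) * (1 - b)) * (b * a + (1 - b) * (1 - a)) =
      1 - a - b + a * b + b * a := by
  have h1 : b * (1 - b) = 0 := by rw [mul_sub, mul_one, hb, sub_self]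
  have h2 : (1 - b) * b = 0 := by rw [sub_mul, one_mul, hb, sub_self]
  have h3 : (1 - b) * (1 - b) = 1 - b := by rw [mul_sub, mul_one, h2, sub_zero]
  calc (a * b + (1 - a) * (1 - b)) * (b * a + (1 - b) * (1 - a))
      = a * (b * b) * a + a * (b * (1 - b)) * (1 - a) + (1 - a) * ((1 - b) * b) * a
        + (1 - a) * ((1 - b) * (1 - b)) * (1 - a) := by noncomm_ring
    _ = a * b * a + (1 - a) * (1 - b) * (1 - a) := by
        rw [hb, h1, h2, h3]; noncomm_ring
    _ = a * b * a + ((1 - a - b + a * b) - (a - a * a - b * a + a * (b * a))) := by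
        noncomm_ring
    _ = 1 - a - b + a * b + b * a := by rw [ha]; noncomm_ring

theorem DR_matrix_normal_and_fixed_subspace {E : Type*} [NormedAddCommGroup E]
    [InnerProductSpace ℝ E] [FiniteDimensional ℝ E]
    (T₁ T₂ : Submodule ℝ E)
    (M : E →L[ℝ] E)
    (hM : M = (projCLM T₁).comp (projCLM T₂) + (projCLM T₁ᗮ).comp (projCLM T₂ᗮ)) :
    M.comp (ContinuousLinearMap.adjoint M) = (ContinuousLinearMap.adjoint M).comp M ∧
      LinearMap.ker (((1 : E →L[ℝ] E) - M : E →L[ℝ] E) : E →ₗ[ℝ] E) = (T₁ ⊓ T₂) ⊔ (T₁ᗮ ⊓ T₂ᗮ) := by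
  set a := projCLM T₁ with haa
  set b := projCLM T₂ with hbb
  have ha : a * a = a := projCLM_idem T₁
  have hb : b * b = b := projCLM_idem T₂
  have hM' : M = a * b + (1 - a) * (1 - b) := by
    rw [hM, projCLM_orth T₁, projCLM_orth T₂]; rfl
  have hstarM : star M = b * a + (1 - b) * (1 - a) := by
    rw [hM', star_add, star_mul, star_mul, star_sub, star_sub, star_one,
      projCLM_star T₁, projCLM_star T₂]
  constructor
  · have : M * star M = star M * M := by
      rw [hstarM, hM', idem_mul_key a b ha hb, idem_mul_key b a hb ha]
      noncomm_ring
    rw [star_eq_adjoint] at this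
    exact this
  · apply le_antisymm
    · intro x hx
      have hfix : M x = x := by
        have h2 : x - M x = 0 := by simpa using LinearMap.mem_ker.1 hx
        exact (sub_eq_zero.1 h2).symm
      set p := projCLM T₂ x with hp
      set q := projCLM T₂ᗮ x with hq
      have hdecomp : p + q = x := Submodule.starProjection_add_starProjection_orthogonal (K := T₂) x
      have hqx : q = x - p := by rw [projCLM_orth T₂] at hq; simp [hq]; rfl
      have hMx : a p + (x - p - a (x - p)) = x := by
        have : M x = a p + (x - p - a (x - p)) := by
          rw [hM', ← hqx]
          simp only [ContinuousLinearMap.add_apply, ContinuousLinearMap.mul_apply,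
            ContinuousLinearMap.sub_apply, ContinuousLinearMap.one_apply]
          rw [← hp]
          congr 1
          rw [hqx]
        rw [← this, hfix]
      -- u := p - a p ∈ T₁ᗮ, v := a (x-p) ∈ T₁, u + v = 0
      have h0 : a p + (x - p - a (x - p)) - x = 0 := by rw [hMx]; exact sub_self x
      have huv : (p - a p) + a (x - p) = 0 := by
        rw [show (p - a p) + a (x - p) = -(a p + (x - p - a (x - p)) - x) by abel, h0, neg_zero]
      have humem : p - a p ∈ T₁ᗮ := by
        have : p - a p = projCLM T₁ᗮ p := by rw [projCLM_orth T₁]; simp; rfl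
        rw [this]; exact projCLM_mem _ _
      have hvmem : a (x - p) ∈ T₁ := projCLM_mem _ _
      have hu0 : p - a p = 0 ∧ a (x - p) = 0 := by
        have hv : a (x - p) = -(p - a p) := by
          rw [eq_neg_iff_add_eq_zero, add_comm]; exact huv
        have hvmem' : a (x - p) ∈ T₁ᗮ := by rw [hv]; exact Submodule.neg_mem _ humem
        have hz : a (x - p) = 0 :=
          (Submodule.orthogonal_disjoint T₁).le_bot ⟨hvmem, hvmem'⟩
        refine ⟨?_, hz⟩
        rw [hz, add_zero] at huv
        exact huv
      obtain ⟨hu0, hv0⟩ := hu0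
      have hpmem : p ∈ T₁ ⊓ T₂ := by
        constructor
        · have : a p = p := (sub_eq_zero.1 hu0).symm
          rw [← this]; exact projCLM_mem _ _
        · exact projCLM_mem _ _
      have hqmem : x - p ∈ T₁ᗮ ⊓ T₂ᗮ := by
        constructor
        · have : projCLM T₁ᗮ (x - p) = x - p := by
            rw [projCLM_orth T₁]
            simp [hv0]
            exact (map_sub a x p).symm.trans hv0
          rw [← this]; exact projCLM_mem _ _
        · rw [← hqx]; exact projCLM_mem _ _
      have : x = p + (x - p) := by abel
      rw [this]
      exact Submodule.add_mem_sup hpmem hqmem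
    · apply sup_le
      · intro x hx
        obtain ⟨hx1, hx2⟩ := hx
        have : M x = x := by
          rw [hM']
          simp only [ContinuousLinearMap.add_apply, ContinuousLinearMap.mul_apply,
            ContinuousLinearMap.sub_apply, ContinuousLinearMap.one_apply]
          rw [projCLM_of_mem T₂ hx2, projCLM_of_mem T₁ hx1]
          simp
        simp [LinearMap.mem_ker, this]
      · intro x hx
        obtain ⟨hx1, hx2⟩ := hx
        have : M x = x := by
          rw [hM']
          simp only [ContinuousLinearMap.add_apply, ContinuousLinearMap.mul_apply,
            ContinuousLinearMap.sub_apply, ContinuousLinearMap.one_apply]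
          rw [projCLM_of_mem_orth T₂ hx2]
          simp only [sub_zero, map_zero, zero_add]
          rw [projCLM_of_mem_orth T₁ hx1, sub_zero]
        simp [LinearMap.mem_ker, this]
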